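/- Let F : ℝ^n → ℝ be a symmetric n-additive function whose trace x ↦ F(x,…,x) is continuous at a point (or more generally locally regular). Then there exists c ∈ ℝ such that F(x₁,…,x_n) = c·x₁⋯x_n for all x₁,…,x_n ∈ ℝ. -/

import Mathlib

open MeasureTheory Metric Filter Finset


lemma cauchy_lin (h : ℝ → ℝ) (hadd : ∀ a b, h (a + b) = h a + h b)
    (hhom : ∀ (q : ℚ) (t : ℝ), h ((q:ℝ) * t) = (q:ℝ) * h t)
    {ε C : ℝ} (hε : 0 < ε) (hb : ∀ t : ℝ, |t| ≤ ε → |h t| ≤ C) (t : ℝ) :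
    h t = h 1 * t := by
  set g : ℝ → ℝ := fun x => h x - h 1 * x with hg
  have gadd : ∀ a b, g (a + b) = g a + g b := by
    intro a b; simp only [hg, hadd]; ring
  have gq : ∀ (q : ℚ) (x : ℝ), g ((q:ℝ) * x) = (q:ℝ) * g x := by
    intro q x; simp only [hg, hhom]; ring
  have g1 : g 1 = 0 := by simp [hg]
  have gq0 : ∀ q : ℚ, g (q:ℝ) = 0 := by
    intro q
    have := gq q 1
    simpa [g1] using this
  have gbound : ∀ x : ℝ, |x| ≤ ε → |g x| ≤ C + |h 1| * ε := by
    intro x hx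
    have h1 : |g x| ≤ |h x| + |h 1 * x| := by
      simp only [hg]; exact abs_sub _ _
    have h2 : |h 1 * x| ≤ |h 1| * ε := by
      rw [abs_mul]
      exact mul_le_mul_of_nonneg_left hx (abs_nonneg _)
    have := hb x hx
    linarith
  set C₂ := C + |h 1| * ε with hC₂
  have gball : ∀ x : ℝ, |g x| ≤ C₂ := by
    intro x
    obtain ⟨q, hq1, hq2⟩ := exists_rat_btwn (show x - ε < x + ε by linarith)
    have hxq : |x - q| ≤ ε := by rw [abs_le]; constructor <;> linarith
    have : g x = g (x - q) + g q := by
      rw [← gadd]; ring_nf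
    rw [this, gq0, add_zero]
    exact gbound _ hxq
  have gzero : ∀ x : ℝ, g x = 0 := by
    intro x
    by_contra hne
    have hpos : 0 < |g x| := abs_pos.mpr hne
    obtain ⟨m, hm⟩ := exists_nat_gt (C₂ / |g x|)
    have hmul : g (((m:ℚ)+1 : ℚ) * x) = ((m:ℝ)+1) * g x := by
      have := gq ((m:ℚ)+1) x
      push_cast at this ⊢
      linarith [this]
    have hb2 : |g (((m:ℚ)+1 : ℚ) * x)| ≤ C₂ := gball _
    rw [hmul, abs_mul] at hb2
    have h3 : |(m:ℝ)+1| = (m:ℝ)+1 := abs_of_pos (by positivity)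
    rw [h3] at hb2
    have hC2pos : 0 ≤ C₂ := le_trans (abs_nonneg _) (gball 0)
    have : C₂ / |g x| < (m:ℝ) + 1 := by linarith
    rw [div_lt_iff₀ hpos] at this
    nlinarith
  have := gzero t
  simp only [hg] at this
  linarith


lemma density_translates {ι : Type*} [Fintype ι] (s : Set ℝ) (hs : MeasurableSet s)
    (h0 : 0 < volume s) :
    ∃ δ : ℝ, 0 < δ ∧ ∀ t : ι → ℝ, (∀ j, |t j| ≤ δ) → ∃ x : ℝ, ∀ j, x + t j ∈ s := by
  rcases isEmpty_or_nonempty ι with hempty | hne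
  · exact ⟨1, one_pos, fun t _ => ⟨0, fun j => (IsEmpty.false j).elim⟩⟩
  set m : ℕ := Fintype.card ι with hm
  have hm1 : 1 ≤ m := Fintype.card_pos
  have hmR : (1:ℝ) ≤ (m:ℝ) := by exact_mod_cast hm1
  have hhalf : 1/(2*(m:ℝ)) ≤ 1/2 := by
    rw [div_le_div_iff₀ (by positivity) (by norm_num)]
    linarith
  -- density point
  have hne0 : volume.restrict s ≠ 0 := by
    intro h
    rw [← Measure.restrict_apply_univ s, h] at h0
    simp at h0
  haveI : (ae (volume.restrict s)).NeBot := ae_neBot.mpr hne0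
  obtain ⟨x₀, hx₀⟩ := (Besicovitch.ae_tendsto_measure_inter_div volume s).exists
  -- choose r
  have ha : ENNReal.ofReal (1 - 1/(2*m)) < 1 := by
    rw [ENNReal.ofReal_lt_one]
    have : 0 < 1/(2*(m:ℝ)) := by positivity
    linarith
  have hev := (tendsto_order.1 hx₀).1 _ ha
  obtain ⟨r, har, hr0⟩ := (hev.and self_mem_nhdsWithin).exists
  replace hr0 : 0 < r := hr0
  set I := closedBall x₀ r with hI
  have hIvol : volume I = ENNReal.ofReal (2*r) := Real.volume_closedBall x₀ r
  have hkey : ENNReal.ofReal ((1 - 1/(2*m)) * (2*r)) < volume (s ∩ I) := by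
    have hne' : volume I ≠ 0 := by
      rw [hIvol]; simp [ENNReal.ofReal_eq_zero]; linarith
    have hnetop : volume I ≠ ⊤ := by rw [hIvol]; exact ENNReal.ofReal_ne_top
    have := (ENNReal.lt_div_iff_mul_lt (Or.inl hne') (Or.inl hnetop)).1 har
    calc ENNReal.ofReal ((1 - 1/(2*m)) * (2*r))
        = ENNReal.ofReal (1 - 1/(2*m)) * volume I := by
          rw [hIvol, ENNReal.ofReal_mul (by linarith)]
      _ < volume (s ∩ I) := this
  set δ : ℝ := r / (2*m) with hδ
  have hδpos : 0 < δ := by rw [hδ]; positivity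
  refine ⟨δ, hδpos, fun t ht => ?_⟩
  set A : ι → Set ℝ := fun j => (fun x => x + t j) ⁻¹' (s ∩ I) with hA
  have hAmeas : ∀ j, MeasurableSet (A j) := fun j =>
    (hs.inter measurableSet_closedBall).preimage (measurable_id.add_const _)
  have hAvol : ∀ j, volume (A j) = volume (s ∩ I) := fun j =>
    measure_preimage_add_right volume (t j) _
  set I' := closedBall x₀ (r + δ) with hI'
  have hAsub : ∀ j, A j ⊆ I' := by
    intro j x hx
    have h1 : x + t j ∈ I := hx.2
    rw [hI, mem_closedBall, Real.dist_eq] at h1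
    rw [hI', mem_closedBall, Real.dist_eq]
    have := abs_le.1 (ht j)
    have := abs_le.1 h1
    rw [abs_le]
    constructor <;> linarith
  by_contra hcon
  push_neg at hcon
  have hcover : I' ⊆ ⋃ j, (I' \ A j) := by
    intro x hx
    obtain ⟨j, hj⟩ := hcon x
    have hxA : x ∉ A j := fun hmem => hj hmem.1
    exact Set.mem_iUnion.2 ⟨j, hx, hxA⟩
  have hI'vol : volume I' = ENNReal.ofReal (2*(r+δ)) := Real.volume_closedBall _ _
  have hI'top : volume I' ≠ ⊤ := by rw [hI'vol]; exact ENNReal.ofReal_ne_top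
  have hdiff : ∀ j, volume (I' \ A j) = volume I' - volume (s ∩ I) := by
    intro j
    rw [measure_diff (hAsub j) (hAmeas j).nullMeasurableSet
      (ne_top_of_le_ne_top hI'top (measure_mono (hAsub j))), hAvol]
  have hle : volume I' ≤ m * (volume I' - volume (s ∩ I)) := by
    calc volume I' ≤ ∑ j, volume (I' \ A j) :=
          le_trans (measure_mono hcover) (measure_iUnion_fintype_le _ _)
      _ = m * (volume I' - volume (s ∩ I)) := by
          simp [hdiff, Finset.sum_const, hm]
  -- convert to reals
  have hsI_le : volume (s ∩ I) ≤ volume I' :=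
    measure_mono (le_trans Set.inter_subset_right (closedBall_subset_closedBall (by linarith : r ≤ r + δ)))
  have hsItop : volume (s ∩ I) ≠ ⊤ := ne_top_of_le_ne_top hI'top hsI_le
  set b := (volume (s ∩ I)).toReal with hb
  have hbgt : (1 - 1/(2*m)) * (2*r) < b := by
    have := ENNReal.toReal_lt_toReal (by exact ENNReal.ofReal_ne_top) hsItop |>.2 hkey
    rwa [ENNReal.toReal_ofReal (by nlinarith [hr0, hhalf])] at this
  have hreal : 2*(r+δ) ≤ m * (2*(r+δ) - b) := by
    have h1 := ENNReal.toReal_le_toReal hI'top (by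
      refine ENNReal.mul_ne_top (by simp) (by
        exact ENNReal.sub_ne_top hI'top)) |>.2 hle
    rw [ENNReal.toReal_mul, ENNReal.toReal_sub_of_le hsI_le hI'top, hI'vol,
      ENNReal.toReal_ofReal (by positivity)] at h1
    simpa using h1
  rw [hδ] at hreal
  have hmpos : (0:ℝ) < m := by linarith
  have e1 : (m:ℝ)*(2*(r + r/(2*m)) - b) = 2*m*r + r - m*b := by
    field_simp
  have e2 : (m:ℝ)*((1 - 1/(2*m))*(2*r)) = 2*m*r - r := by
    field_simp
  have h5 := mul_lt_mul_of_pos_left hbgt hmpos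
  rw [e2] at h5
  rw [e1] at hreal
  have hδ'pos : 0 < r/(2*(m:ℝ)) := by positivity
  linarith


lemma polar_identity (n : ℕ) (G : MultilinearMap ℚ (fun _ : Fin n => ℝ) ℝ)
    (hsym : ∀ (σ : Equiv.Perm (Fin n)) (v : Fin n → ℝ), G (v ∘ σ) = G v)
    (x : ℝ) (v : Fin n → ℝ) :
    ∑ S : Finset (Fin n), (-1:ℝ)^(n - S.card) * G (fun _ => x + ∑ i ∈ S, v i)
      = (n.factorial : ℝ) * G v := by
  classical
  set w : Option (Fin n) → ℝ := fun o => o.elim x v with hw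
  have step1 : ∀ S : Finset (Fin n),
      (x + ∑ i ∈ S, v i) = ∑ o ∈ insert none (S.image some), w o := by
    intro S
    rw [Finset.sum_insert (by simp), Finset.sum_image (by intro a _ b _ h; simpa using h)]
    simp [hw]
  set B : (Fin n → Option (Fin n)) → Finset (Fin n) :=
    fun r => univ.filter (fun j => ∃ i, r i = some j) with hB
  have hcond : ∀ (S : Finset (Fin n)) (r : Fin n → Option (Fin n)),
      (∀ i, r i ∈ insert none (S.image some)) ↔ B r ⊆ S := by
    intro S r
    constructor
    · intro h j hj
      rw [hB, mem_filter] at hj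
      obtain ⟨-, i, hi⟩ := hj
      have := h i
      rw [hi, mem_insert] at this
      rcases this with h' | h'
      · exact absurd h' (by simp)
      · obtain ⟨j', hj', he⟩ := mem_image.1 h'
        obtain rfl : j' = j := by simpa using he
        exact hj'
    · intro h i
      rcases hr : r i with - | j
      · simp
      · have hjB : j ∈ B r := by
          rw [hB, mem_filter]
          exact ⟨mem_univ _, i, hr⟩
        exact mem_insert_of_mem (mem_image.2 ⟨j, h hjB, rfl⟩)
  have step2 : ∀ S : Finset (Fin n),
      G (fun _ => x + ∑ i ∈ S, v i)
        = ∑ r : Fin n → Option (Fin n), if B r ⊆ S then G (fun i => w (r i)) else 0 := by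
    intro S
    have e1 : (fun _ : Fin n => x + ∑ i ∈ S, v i)
        = fun _ : Fin n => ∑ o ∈ insert none (S.image some), w o := funext fun _ => step1 S
    rw [e1, G.map_sum_finset (fun _ o => w o) (fun _ => insert none (S.image some))]
    have e2 : Fintype.piFinset (fun _ : Fin n => insert none (S.image some))
        = univ.filter (fun r : Fin n → Option (Fin n) => B r ⊆ S) := by
      ext r
      simp only [Fintype.mem_piFinset, mem_filter, mem_univ, true_and]
      exact hcond S r
    rw [e2, Finset.sum_filter]
  -- inner inclusion-exclusion sum
  have inner2 : ∀ Bo : Finset (Fin n),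
      (∑ S : Finset (Fin n), if Bo ⊆ S then (-1:ℝ)^(n - S.card) else 0)
        = if Bo = univ then 1 else 0 := by
    intro Bo
    rw [← Finset.sum_filter]
    have e3 : ∀ S : Finset (Fin n), (-1:ℝ)^(n - S.card) = (-1:ℝ)^(Sᶜ.card) := by
      intro S
      rw [Finset.card_compl, Fintype.card_fin]
    have e4 : (∑ S ∈ univ.filter (fun S => Bo ⊆ S), (-1:ℝ)^(n - S.card))
        = ∑ U ∈ Boᶜ.powerset, (-1:ℝ)^U.card := by
      refine Finset.sum_nbij' (fun S => Sᶜ) (fun U => Uᶜ) ?_ ?_ ?_ ?_ ?_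
      · intro S hS
        rw [mem_filter] at hS
        rw [mem_powerset]
        exact compl_subset_compl.2 hS.2
      · intro U hU
        rw [mem_powerset] at hU
        rw [mem_filter]
        exact ⟨mem_univ _, by rwa [← compl_subset_compl, compl_compl] at hU⟩
      · intro S _; simp
      · intro U _; simp
      · intro S _; rw [e3]
    rw [e4]
    have := Finset.sum_powerset_neg_one_pow_card (α := Fin n) (x := Boᶜ)
    have hcast : (∑ U ∈ Boᶜ.powerset, (-1:ℝ)^U.card)
        = ((∑ U ∈ Boᶜ.powerset, (-1:ℤ)^U.card : ℤ) : ℝ) := by push_cast; rfl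
    rw [hcast, this]
    by_cases h : Bo = univ
    · simp [h]
    · have hne : Boᶜ ≠ ∅ := fun he => h ((Finset.compl_eq_empty_iff Bo).1 he)
      simp [h, hne]
  calc ∑ S : Finset (Fin n), (-1:ℝ)^(n - S.card) * G (fun _ => x + ∑ i ∈ S, v i)
      = ∑ S : Finset (Fin n), ∑ r : Fin n → Option (Fin n),
          (if B r ⊆ S then (-1:ℝ)^(n - S.card) * G (fun i => w (r i)) else 0) := by
        refine Finset.sum_congr rfl fun S _ => ?_
        rw [step2, Finset.mul_sum]
        refine Finset.sum_congr rfl fun r _ => ?_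
        rw [mul_ite, mul_zero]
    _ = ∑ r : Fin n → Option (Fin n), ∑ S : Finset (Fin n),
          (if B r ⊆ S then (-1:ℝ)^(n - S.card) * G (fun i => w (r i)) else 0) :=
        Finset.sum_comm
    _ = ∑ r : Fin n → Option (Fin n),
          G (fun i => w (r i)) * (if B r = univ then 1 else 0) := by
        refine Finset.sum_congr rfl fun r _ => ?_
        rw [← inner2 (B r), Finset.mul_sum]
        refine Finset.sum_congr rfl fun S _ => ?_
        rw [mul_ite, mul_zero, mul_comm]
    _ = ∑ r ∈ univ.filter (fun r : Fin n → Option (Fin n) => B r = univ),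
          G (fun i => w (r i)) := by
        rw [Finset.sum_filter]
        refine Finset.sum_congr rfl fun r _ => ?_
        rw [mul_ite, mul_one, mul_zero]
    _ = (n.factorial : ℝ) * G v := by
        have himg : univ.filter (fun r : Fin n → Option (Fin n) => B r = univ)
            = Finset.image (fun σ : Equiv.Perm (Fin n) => (some ∘ σ : Fin n → Option (Fin n))) univ := by
          ext r
          simp only [mem_filter, mem_univ, true_and, Finset.mem_image]
          constructor
          · intro hr
            have hex : ∀ j : Fin n, ∃ i, r i = some j := by
              intro j
              have : j ∈ B r := hr ▸ mem_univ j
              rw [hB, mem_filter] at this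
              exact this.2
            choose g hg using hex
            have hginj : Function.Injective g := by
              intro j₁ j₂ he
              have := (hg j₁).symm.trans (he ▸ hg j₂)
              simpa using this
            have hgbij : Function.Bijective g :=
              ⟨hginj, Finite.surjective_of_injective hginj⟩
            set σ' := Equiv.ofBijective g hgbij
            refine ⟨σ'.symm, ?_⟩
            funext i
            have : g (σ'.symm i) = i := σ'.apply_symm_apply i
            calc (some ∘ σ'.symm) i = some (σ'.symm i) := rfl
              _ = r (g (σ'.symm i)) := (hg _).symm
              _ = r i := by rw [this]
          · rintro ⟨σ, rfl⟩
            ext j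
            simp only [hB, mem_filter, mem_univ, true_and, iff_true]
            exact ⟨σ.symm j, by simp⟩
        have hinj : ∀ σ₁ ∈ (univ : Finset (Equiv.Perm (Fin n))), ∀ σ₂ ∈ (univ : Finset (Equiv.Perm (Fin n))),
            (some ∘ ⇑σ₁ : Fin n → Option (Fin n)) = (some ∘ ⇑σ₂ : Fin n → Option (Fin n)) → σ₁ = σ₂ := by
          intro σ₁ _ σ₂ _ h
          apply Equiv.ext
          intro i
          exact Option.some_injective _ (congrFun h i)
        rw [himg, Finset.sum_image hinj]
        have hterm : ∀ σ : Equiv.Perm (Fin n),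
            G (fun i => w ((some ∘ σ) i)) = G v := by
          intro σ
          have : (fun i => w ((some ∘ σ) i)) = v ∘ σ := by
            funext i; simp [hw]
          rw [this, hsym]
        rw [Finset.sum_congr rfl (fun σ _ => hterm σ), Finset.sum_const, Finset.card_univ,
          Fintype.card_perm, Fintype.card_fin, nsmul_eq_mul]

theorem stmt_10 (n : ℕ) (F : (Fin n → ℝ) → ℝ)
    (haddF : ∀ (i : Fin n) (v : Fin n → ℝ) (y : ℝ),
      F (Function.update v i (v i + y)) = F v + F (Function.update v i y))
    (hsym : ∀ (σ : Equiv.Perm (Fin n)) (v : Fin n → ℝ), F (v ∘ σ) = F v)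
    (hreg : (∃ x₀ : ℝ, ContinuousAt (fun x : ℝ => F (fun _ => x)) x₀) ∨
      (∃ s : Set ℝ, MeasurableSet s ∧ 0 < volume s ∧
        ∃ C : ℝ, ∀ x ∈ s, |F (fun _ => x)| ≤ C) ∨
      (∃ s : Set ℝ, MeasurableSet s ∧ 0 < volume s ∧
        Measurable (fun x : s => F (fun _ => (x : ℝ))))) :
    ∃ c : ℝ, ∀ v : Fin n → ℝ, F v = c * ∏ i, v i := by
  classical
  -- multi-additivity in each coordinate
  have hadd2 : ∀ (i : Fin n) (v : Fin n → ℝ) (x y : ℝ),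
      F (Function.update v i (x + y)) = F (Function.update v i x) + F (Function.update v i y) := by
    intro i v x y
    have h := haddF i (Function.update v i x) y
    rwa [Function.update_self, Function.update_idem, Function.update_idem] at h
  have hsmul : ∀ (i : Fin n) (v : Fin n → ℝ) (q : ℚ) (x : ℝ),
      F (Function.update v i (q • x)) = q • F (Function.update v i x) := by
    intro i v q x
    exact (AddMonoidHom.mk' (fun y => F (Function.update v i y))
      (hadd2 i v)).toRatLinearMap.map_smul q x
  let G : MultilinearMap ℚ (fun _ : Fin n => ℝ) ℝ :=
    { toFun := F
      map_update_add' := by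
        intro inst m i x y
        have hi : inst = (instDecidableEqFin n) := Subsingleton.elim _ _
        subst hi
        exact hadd2 i m x y
      map_update_smul' := by
        intro inst m i q x
        have hi : inst = (instDecidableEqFin n) := Subsingleton.elim _ _
        subst hi
        exact hsmul i m q x }
  have hGF : ∀ v, G v = F v := fun _ => rfl
  have hsymG : ∀ (σ : Equiv.Perm (Fin n)) (v : Fin n → ℝ), G (v ∘ σ) = G v := by
    intro σ v
    rw [hGF, hGF]
    exact hsym σ v
  -- unify regularity to boundedness on a positive-measure set
  have hbound : ∃ s : Set ℝ, MeasurableSet s ∧ 0 < volume s ∧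
      ∃ C : ℝ, ∀ x ∈ s, |F (fun _ => x)| ≤ C := by
    rcases hreg with ⟨x₀, hc⟩ | h | ⟨s, hsm, hsp, hmeas⟩
    · obtain ⟨δ', hδ', hcb⟩ := Metric.continuousAt_iff.1 hc 1 one_pos
      refine ⟨Metric.ball x₀ δ', measurableSet_ball, ?_, |F (fun _ => x₀)| + 1, ?_⟩
      · rw [Real.volume_ball]
        exact ENNReal.ofReal_pos.mpr (by linarith)
      · intro x hx
        have h1 := hcb (Metric.mem_ball.1 hx)
        rw [Real.dist_eq] at h1
        have h2 := abs_sub_abs_le_abs_sub (F (fun _ => x)) (F (fun _ => x₀))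
        linarith
    · exact h
    · set sN : ℕ → Set ℝ := fun N => {x | x ∈ s ∧ |F (fun _ => x)| ≤ N} with hsN
      have hsNmeas : ∀ N : ℕ, MeasurableSet (sN N) := by
        intro N
        have h1 : sN N = Subtype.val '' {y : s | |F (fun _ => (y:ℝ))| ≤ N} := by
          ext x
          simp only [hsN, Set.mem_image, Set.mem_setOf_eq]
          constructor
          · rintro ⟨hxs, hb⟩; exact ⟨⟨x, hxs⟩, hb, rfl⟩
          · rintro ⟨⟨y, hy⟩, hb, rfl⟩; exact ⟨hy, hb⟩
        rw [h1]
        exact hsm.subtype_image (measurableSet_le hmeas.abs measurable_const)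
      have hex : ∃ N : ℕ, 0 < volume (sN N) := by
        by_contra hno
        push_neg at hno
        have hU : s ⊆ ⋃ N : ℕ, sN N := by
          intro x hx
          exact Set.mem_iUnion.2 ⟨⌈|F (fun _ => x)|⌉₊, hx, Nat.le_ceil _⟩
        have : volume s = 0 := measure_mono_null hU
          (measure_iUnion_null (fun N => le_antisymm (le_of_not_gt (by
            intro hlt; exact absurd hlt (by simpa using hno N))) (zero_le)))
        exact absurd this (ne_of_gt hsp)
      obtain ⟨N, hN⟩ := hex
      exact ⟨sN N, hsNmeas N, hN, N, fun x hx => hx.2⟩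
  obtain ⟨s, hsm, hsp, C, hsC⟩ := hbound
  obtain ⟨δ, hδpos, hδ⟩ := density_translates (ι := Finset (Fin n)) s hsm hsp
  set ε : ℝ := δ / (n+1) with hε
  have hεpos : 0 < ε := by rw [hε]; positivity
  have hfact : (0:ℝ) < n.factorial := by exact_mod_cast n.factorial_pos
  -- bound F on the box [-ε, ε]^n
  have hnε : (n:ℝ) * ε ≤ δ := by
    rw [hε, mul_div_assoc']
    rw [div_le_iff₀ (by positivity : (0:ℝ) < (n:ℝ)+1)]
    nlinarith [hδpos]
  have hboxF : ∀ y : Fin n → ℝ, (∀ i, |y i| ≤ ε) →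
      |F y| ≤ 2^n * C / n.factorial := by
    intro y hy
    have ht : ∀ S : Finset (Fin n), |∑ i ∈ S, y i| ≤ δ := by
      intro S
      calc |∑ i ∈ S, y i| ≤ ∑ i ∈ S, |y i| := Finset.abs_sum_le_sum_abs _ _
        _ ≤ ∑ _i ∈ S, ε := Finset.sum_le_sum (fun i _ => hy i)
        _ = S.card * ε := by rw [Finset.sum_const, nsmul_eq_mul]
        _ ≤ n * ε := by
            have h1 : (S.card : ℝ) ≤ n := by
              exact_mod_cast (Finset.card_le_univ S).trans_eq (by simp)
            exact mul_le_mul_of_nonneg_right h1 hεpos.le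
        _ ≤ δ := hnε
    obtain ⟨x, hx⟩ := hδ (fun S => ∑ i ∈ S, y i) ht
    have hpol := polar_identity n G hsymG x y
    have habs : |(n.factorial : ℝ) * G y| ≤ 2^n * C := by
      rw [← hpol]
      calc |∑ S : Finset (Fin n), (-1:ℝ)^(n - S.card) * G (fun _ => x + ∑ i ∈ S, y i)|
          ≤ ∑ S : Finset (Fin n), |(-1:ℝ)^(n - S.card) * G (fun _ => x + ∑ i ∈ S, y i)| :=
            Finset.abs_sum_le_sum_abs _ _
        _ ≤ ∑ _S : Finset (Fin n), C := by
            refine Finset.sum_le_sum (fun S _ => ?_)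
            rw [abs_mul, abs_pow, abs_neg, abs_one, one_pow, one_mul, hGF]
            exact hsC _ (hx S)
        _ = 2^n * C := by
            rw [Finset.sum_const, Finset.card_univ, Fintype.card_finset, Fintype.card_fin,
              nsmul_eq_mul]
            push_cast
            ring
    rw [abs_mul, abs_of_pos hfact, hGF] at habs
    rw [le_div_iff₀ hfact]
    linarith
  -- each coordinate map is genuinely linear on the box
  have hLC : ∀ (w : Fin n → ℝ), (∀ j, |w j| ≤ ε) → ∀ (i : Fin n) (t : ℝ),
      F (Function.update w i t) = (t / ε) * F (Function.update w i ε) := by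
    intro w hw i t
    set h : ℝ → ℝ := fun u => F (Function.update w i u) with hh
    have hadd' : ∀ a b, h (a + b) = h a + h b := fun a b => hadd2 i w a b
    have hhom' : ∀ (q : ℚ) (u : ℝ), h ((q:ℝ) * u) = (q:ℝ) * h u := by
      intro q u
      have h3 := hsmul i w q u
      simpa [Rat.smul_def] using h3
    have hbnd : ∀ u, |u| ≤ ε → |h u| ≤ 2^n * C / n.factorial := by
      intro u hu
      refine hboxF _ ?_
      intro j
      by_cases hj : j = i
      · subst hj; rw [Function.update_self]; exact hu
      · rw [Function.update_of_ne hj]; exact hw j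
    have hc := cauchy_lin h hadd' hhom' hεpos hbnd
    calc F (Function.update w i t) = h 1 * t := hc t
      _ = (t / ε) * (h 1 * ε) := by field_simp
      _ = (t / ε) * F (Function.update w i ε) := by rw [← hc ε]
  -- product formula on the box, coordinate by coordinate
  have hkey : ∀ k : ℕ, k ≤ n → ∀ v : Fin n → ℝ, (∀ i, |v i| ≤ ε) →
      F v = (∏ i ∈ Finset.univ.filter (fun i : Fin n => (i:ℕ) < k), (v i / ε)) *
        F (fun i => if (i:ℕ) < k then ε else v i) := by
    intro k
    induction k with
    | zero =>
        intro _ v _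
        simp
    | succ k ih =>
        intro hk v hv
        have hk' : k ≤ n := by omega
        have hkn : k < n := by omega
        set jk : Fin n := ⟨k, hkn⟩ with hjk
        set w : Fin n → ℝ := fun i => if (i:ℕ) < k then ε else v i with hwdef
        have hwbox : ∀ j, |w j| ≤ ε := by
          intro j
          rw [hwdef]
          by_cases hj : (j:ℕ) < k
          · simp only [hj, if_true]
            rw [abs_of_pos hεpos]
          · simp only [hj, if_false]
            exact hv j
        have hw1 : w = Function.update w jk (v jk) := by
          funext j
          by_cases hj : j = jk
          · subst hj
            rw [Function.update_self, hwdef]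
            simp [hjk]
          · rw [Function.update_of_ne hj]
        have hw2 : Function.update w jk ε = fun i : Fin n => if (i:ℕ) < k + 1 then ε else v i := by
          funext j
          by_cases hj : j = jk
          · subst hj
            rw [Function.update_self]
            simp [hjk]
          · rw [Function.update_of_ne hj, hwdef]
            have hne : (j:ℕ) ≠ k := fun hc => hj (Fin.ext (by simp [hjk, hc]))
            by_cases h2 : (j:ℕ) < k
            · simp only [h2, if_true, show (j:ℕ) < k+1 by omega, if_true]
            · simp only [h2, if_false, show ¬((j:ℕ) < k+1) by omega, if_false]
        have hstep : F w = (v jk / ε) * F (fun i => if (i:ℕ) < k + 1 then ε else v i) := by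
          conv_lhs => rw [hw1]
          rw [hLC w hwbox jk (v jk), hw2]
        have hnotmem : jk ∉ Finset.univ.filter (fun i : Fin n => (i:ℕ) < k) := by
          simp [hjk]
        have hfil : Finset.univ.filter (fun i : Fin n => (i:ℕ) < k + 1)
            = insert jk (Finset.univ.filter (fun i : Fin n => (i:ℕ) < k)) := by
          ext j
          simp only [Finset.mem_filter, Finset.mem_univ, true_and, Finset.mem_insert]
          constructor
          · intro hj
            by_cases h2 : (j:ℕ) = k
            · left; exact Fin.ext (by simp [hjk, h2])
            · right; omega
          · rintro (rfl | hj)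
            · simp [hjk]
            · omega
        calc F v = (∏ i ∈ Finset.univ.filter (fun i : Fin n => (i:ℕ) < k), (v i / ε)) * F w :=
              ih hk' v hv
          _ = (∏ i ∈ Finset.univ.filter (fun i : Fin n => (i:ℕ) < k), (v i / ε)) *
                ((v jk / ε) * F (fun i => if (i:ℕ) < k + 1 then ε else v i)) := by rw [hstep]
          _ = (∏ i ∈ Finset.univ.filter (fun i : Fin n => (i:ℕ) < k + 1), (v i / ε)) *
                F (fun i => if (i:ℕ) < k + 1 then ε else v i) := by
              rw [hfil, Finset.prod_insert hnotmem]
              ring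
  have hboxformula : ∀ v : Fin n → ℝ, (∀ i, |v i| ≤ ε) →
      F v = (∏ i, (v i / ε)) * F (fun _ => ε) := by
    intro v hv
    have h1 := hkey n le_rfl v hv
    have hful : Finset.univ.filter (fun i : Fin n => (i:ℕ) < n) = Finset.univ := by
      ext j; simp [j.isLt]
    have hE : (fun i : Fin n => if (i:ℕ) < n then ε else v i) = fun _ => ε := by
      funext j; simp [j.isLt]
    rwa [hful, hE] at h1
  -- conclusion, via rational scaling
  refine ⟨F (fun _ => ε) / ε ^ n, fun v => ?_⟩
  set M : ℝ := 1 + ∑ j, |v j| with hM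
  have hMpos : 0 < M := by
    rw [hM]
    have : 0 ≤ ∑ j, |v j| := Finset.sum_nonneg (fun j _ => abs_nonneg _)
    linarith
  have hMi : ∀ i, |v i| ≤ M := by
    intro i
    have h1 : |v i| ≤ ∑ j, |v j| :=
      Finset.single_le_sum (f := fun j => |v j|) (fun j _ => abs_nonneg _) (Finset.mem_univ i)
    rw [hM]; linarith
  obtain ⟨q, hq⟩ := exists_rat_gt (M / ε)
  have hqpos : 0 < (q:ℝ) := lt_trans (by positivity) hq
  have hMqε : M ≤ (q:ℝ) * ε := by
    rw [div_lt_iff₀ hεpos] at hq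
    linarith
  have hsc : ∀ i, |v i / (q:ℝ)| ≤ ε := by
    intro i
    rw [abs_div, abs_of_pos hqpos, div_le_iff₀ hqpos]
    calc |v i| ≤ M := hMi i
      _ ≤ (q:ℝ) * ε := hMqε
      _ = ε * (q:ℝ) := mul_comm _ _
  have hscale : F v = (q:ℝ)^n * F (fun i => v i / (q:ℝ)) := by
    have h1 : v = fun i => (q:ℚ) • (v i / (q:ℝ)) := by
      funext i
      rw [Rat.smul_def]
      field_simp
    have h2 := G.map_smul_univ (fun _ : Fin n => (q:ℚ)) (fun i => v i / (q:ℝ))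
    rw [Finset.prod_const, Finset.card_univ, Fintype.card_fin] at h2
    calc F v = G (fun i => (q:ℚ) • (v i / (q:ℝ))) := by rw [hGF]; exact congrArg _ h1
      _ = ((q:ℚ)^n) • G (fun i => v i / (q:ℝ)) := h2
      _ = (q:ℝ)^n * F (fun i => v i / (q:ℝ)) := by
          rw [hGF, Rat.smul_def]
          push_cast
          ring
  rw [hscale, hboxformula _ hsc]
  have hprod : (∏ i, (v i / (q:ℝ) / ε)) = (∏ i, v i) / ((q:ℝ)^n * ε^n) := by
    rw [Finset.prod_div_distrib, Finset.prod_div_distrib, Finset.prod_const, Finset.prod_const,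
      Finset.card_univ, Fintype.card_fin, div_div]
  rw [hprod]
  have hq0 : (q:ℝ) ≠ 0 := ne_of_gt hqpos
  have hε0 : ε ≠ 0 := ne_of_gt hεpos
  field_simp
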